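/- arXiv:1808.05634 — 4 statements merged into one kernel-verified Lean document; each statement's English description precedes it below -/
import Mathlib

section
/- The function Z(x_φ, x_ψ, y) = x_φ² - x_ψ² + y² - 1 satisfies Z' = αZ along the flow of the flat quintom system, where α = x_φ² - x_ψ² - y² and the derivatives are x_φ' = (1/3)(3my² + (q-2)x_φ), x_ψ' = -(1/3)(3ny² - (q-2)x_ψ), y' = (1/3)(1 + q - 3(m x_φ + n x_ψ))y with q = (1/2)(3(x_φ² - x_ψ² - y²) + 1). Consequently the set {x_φ² - x_ψ² + y² ≤ 1} is invariant under the flow. -/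
theorem stmt_0 (m n : ℝ) (xφ xψ y : ℝ → ℝ) (q : ℝ → ℝ)
    (hq : ∀ t, q t = (1/2) * (3 * ((xφ t)^2 - (xψ t)^2 - (y t)^2) + 1))
    (hφ : ∀ t, HasDerivAt xφ ((1/3) * (3 * m * (y t)^2 + (q t - 2) * xφ t)) t)
    (hψ : ∀ t, HasDerivAt xψ (-(1/3) * (3 * n * (y t)^2 - (q t - 2) * xψ t)) t)
    (hy : ∀ t, HasDerivAt y ((1/3) * (1 + q t - 3 * (m * xφ t + n * xψ t)) * y t) t) :
    (∀ t, HasDerivAt (fun s => (xφ s)^2 - (xψ s)^2 + (y s)^2 - 1)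
      (((xφ t)^2 - (xψ t)^2 - (y t)^2) * ((xφ t)^2 - (xψ t)^2 + (y t)^2 - 1)) t) ∧
    (∀ t₀, (xφ t₀)^2 - (xψ t₀)^2 + (y t₀)^2 ≤ 1 →
      ∀ t, (xφ t)^2 - (xψ t)^2 + (y t)^2 ≤ 1) := by
  set Z : ℝ → ℝ := fun s => (xφ s)^2 - (xψ s)^2 + (y s)^2 - 1 with hZ
  set α : ℝ → ℝ := fun s => (xφ s)^2 - (xψ s)^2 - (y s)^2 with hα
  have hZ' : ∀ t, HasDerivAt Z (α t * Z t) t := by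
    intro t
    have h := ((((hφ t).pow 2).sub ((hψ t).pow 2)).add ((hy t).pow 2)).sub_const 1
    refine h.congr_deriv ?_
    rw [hq t]; push_cast; ring
  refine ⟨hZ', ?_⟩
  intro t₀ h0 t
  have hdα : Continuous α := by
    have h1 : Continuous xφ := Differentiable.continuous (fun s => (hφ s).differentiableAt)
    have h2 : Continuous xψ := Differentiable.continuous (fun s => (hψ s).differentiableAt)
    have h3 : Continuous y := Differentiable.continuous (fun s => (hy s).differentiableAt)
    exact ((h1.pow 2).sub (h2.pow 2)).sub (h3.pow 2)
  set I : ℝ → ℝ := fun s => ∫ u in t₀..s, α u with hI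
  have hI' : ∀ s, HasDerivAt I (α s) s := fun s =>
    intervalIntegral.integral_hasDerivAt_right (hdα.intervalIntegrable _ _)
      (hdα.stronglyMeasurableAtFilter _ _) hdα.continuousAt
  set W : ℝ → ℝ := fun s => Z s * Real.exp (-(I s)) with hW
  have hW' : ∀ s, HasDerivAt W 0 s := by
    intro s
    have h := (hZ' s).mul (((hI' s).neg).exp)
    refine h.congr_deriv ?_
    ring
  have hconst : W t = W t₀ := by
    apply is_const_of_deriv_eq_zero (fun s => (hW' s).differentiableAt)
    intro s; exact (hW' s).deriv
  have hIt0 : I t₀ = 0 := by simp [hI]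
  have hZt0 : Z t₀ ≤ 0 := by simp only [hZ]; linarith
  have hWt0 : W t₀ ≤ 0 := by
    rw [hW]; simp only
    exact mul_nonpos_of_nonpos_of_nonneg hZt0 (Real.exp_pos _).le
  have hWt : W t ≤ 0 := hconst ▸ hWt0
  have hZt : Z t ≤ 0 := by
    by_contra h
    push_neg at h
    have := mul_pos h (Real.exp_pos (-(I t)))
    simp only [hW] at hWt
    linarith
  simp only [hZ] at hZt
  linarith
end

section
/- On the invariant set y = 0, z = 0 with 0 < x_φ² - x_ψ² < 1, the deceleration factor q = (1/2)(3(x_φ² - x_ψ²) + 1) satisfies 1/2 < q < 2, and the function W₄ = (n x_φ + m x_ψ)⁴/(1 - x_φ² + x_ψ²)² satisfies W₄' = (4(q-2))/(3(1 - x_φ² + x_ψ²)) · W₄ < 0 whenever n x_φ + m x_ψ ≠ 0; i.e., W₄ is strictly decreasing along such orbits. -/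
theorem stmt_4 (m n : ℝ) (xφ xψ : ℝ → ℝ) (q : ℝ → ℝ)
    (hq : ∀ t, q t = (1/2) * (3 * ((xφ t)^2 - (xψ t)^2) + 1))
    (hφ : ∀ t, HasDerivAt xφ ((1/3) * (q t - 2) * xφ t) t)
    (hψ : ∀ t, HasDerivAt xψ ((1/3) * (q t - 2) * xψ t) t) :
    ∀ t, 0 < (xφ t)^2 - (xψ t)^2 → (xφ t)^2 - (xψ t)^2 < 1 →
      (1/2 < q t ∧ q t < 2) ∧
      HasDerivAt (fun s => (n * xφ s + m * xψ s)^4 / (1 - (xφ s)^2 + (xψ s)^2)^2)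
        ((4 * (q t - 2)) / (3 * (1 - (xφ t)^2 + (xψ t)^2)) *
          ((n * xφ t + m * xψ t)^4 / (1 - (xφ t)^2 + (xψ t)^2)^2)) t ∧
      (n * xφ t + m * xψ t ≠ 0 →
        (4 * (q t - 2)) / (3 * (1 - (xφ t)^2 + (xψ t)^2)) *
          ((n * xφ t + m * xψ t)^4 / (1 - (xφ t)^2 + (xψ t)^2)^2) < 0) := by
  intro t h0 h1
  have hD : 0 < 1 - (xφ t)^2 + (xψ t)^2 := by linarith
  have hDne : (1 - (xφ t)^2 + (xψ t)^2) ≠ 0 := ne_of_gt hD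
  have hq2 : q t - 2 < 0 := by rw [hq t]; linarith
  refine ⟨⟨by rw [hq t]; linarith, by rw [hq t]; linarith⟩, ?_, ?_⟩
  · have hu : HasDerivAt (fun s => (n * xφ s + m * xψ s)^4)
        (4 * (n * xφ t + m * xψ t)^3 *
          (n * ((1/3) * (q t - 2) * xφ t) + m * ((1/3) * (q t - 2) * xψ t))) t := by
      have := (((hφ t).const_mul n).fun_add ((hψ t).const_mul m)).fun_pow 4
      simpa using this
    have hDD : HasDerivAt (fun s => (1 - (xφ s)^2 + (xψ s)^2)^2)
        (2 * (1 - (xφ t)^2 + (xψ t)^2) *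
          (-(2 * xφ t * ((1/3) * (q t - 2) * xφ t)) +
            2 * xψ t * ((1/3) * (q t - 2) * xψ t))) t := by
      have h2 : HasDerivAt (fun s => 1 - (xφ s)^2 + (xψ s)^2)
          (-(2 * xφ t * ((1/3) * (q t - 2) * xφ t)) +
            2 * xψ t * ((1/3) * (q t - 2) * xψ t)) t := by
        have hb := ((hφ t).fun_pow 2)
        have hc := ((hψ t).fun_pow 2)
        have := ((hasDerivAt_const t (1:ℝ)).fun_sub hb).fun_add hc
        simpa [mul_comm, mul_assoc, mul_left_comm] using this
      simpa [pow_one, mul_comm, mul_assoc, mul_left_comm] using h2.fun_pow 2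
    have hDDne : (1 - (xφ t)^2 + (xψ t)^2)^2 ≠ 0 := pow_ne_zero 2 hDne
    have := hu.fun_div hDD hDDne
    refine this.congr_deriv ?_
    rw [div_mul_div_comm, div_eq_div_iff (pow_ne_zero 2 hDDne) (mul_ne_zero (mul_ne_zero three_ne_zero hDne) (pow_ne_zero 2 hDne))]
    ring
  · intro hu0
    apply mul_neg_of_neg_of_pos
    · apply div_neg_of_neg_of_pos
      · nlinarith
      · linarith
    · positivity
end

section
/- For the 5-dimensional system D' = −(1/3)(1−D²)Q, U_φ' = −D(1 − Q/3)U_φ + mW², U_ψ' = −D(1 − Q/3)U_ψ − nW², W' = −(−(1/3)DQ + mU_φ + nU_ψ)W, Ω' = −D(−(2/3)Q + γ)Ω, with Q = D² + 2(U_φ² − U_ψ²) − W² + (1/2)(3γ−2)Ω, the function M = (nU_φ + mU_ψ)²Ω³ / [(1−D²)(D² − U_φ² + U_ψ² − W² − Ω)³] satisfies M' = −3γDM wherever M is defined. -/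
theorem stmt_15 (m n γ : ℝ) (D Uφ Uψ W Ω : ℝ → ℝ) (Q : ℝ → ℝ)
    (hQ : ∀ t, Q t = (D t)^2 + 2 * ((Uφ t)^2 - (Uψ t)^2) - (W t)^2
      + (1/2) * (3*γ - 2) * Ω t)
    (hD : ∀ t, HasDerivAt D (-(1/3) * (1 - (D t)^2) * Q t) t)
    (hUφ : ∀ t, HasDerivAt Uφ (-(D t) * (1 - Q t / 3) * Uφ t + m * (W t)^2) t)
    (hUψ : ∀ t, HasDerivAt Uψ (-(D t) * (1 - Q t / 3) * Uψ t - n * (W t)^2) t)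
    (hW : ∀ t, HasDerivAt W (-(-(1/3) * D t * Q t + m * Uφ t + n * Uψ t) * W t) t)
    (hΩ : ∀ t, HasDerivAt Ω (-(D t) * (-(2/3) * Q t + γ) * Ω t) t) :
    ∀ t, (1 - (D t)^2) * ((D t)^2 - (Uφ t)^2 + (Uψ t)^2 - (W t)^2 - Ω t) ≠ 0 →
      HasDerivAt (fun s => (n * Uφ s + m * Uψ s)^2 * (Ω s)^3 /
          ((1 - (D s)^2) * ((D s)^2 - (Uφ s)^2 + (Uψ s)^2 - (W s)^2 - Ω s)^3))
        (-3 * γ * D t * ((n * Uφ t + m * Uψ t)^2 * (Ω t)^3 /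
          ((1 - (D t)^2) * ((D t)^2 - (Uφ t)^2 + (Uψ t)^2 - (W t)^2 - Ω t)^3))) t := by
  intro t ht
  have h1 : (1 - (D t)^2) ≠ 0 := fun h => ht (by rw [h]; ring)
  have h2 : ((D t)^2 - (Uφ t)^2 + (Uψ t)^2 - (W t)^2 - Ω t) ≠ 0 :=
    fun h => ht (by rw [h]; ring)
  have hL : HasDerivAt (fun s => n * Uφ s + m * Uψ s)
      (n * (-(D t) * (1 - Q t / 3) * Uφ t + m * (W t)^2)
       + m * (-(D t) * (1 - Q t / 3) * Uψ t - n * (W t)^2)) t :=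
    ((hUφ t).const_mul n).add ((hUψ t).const_mul m)
  have hN := (hL.pow 2).mul ((hΩ t).pow 3)
  have hX : HasDerivAt (fun s => (D s)^2 - (Uφ s)^2 + (Uψ s)^2 - (W s)^2 - Ω s)
      ((2:ℕ) * D t ^ 1 * (-(1/3) * (1 - (D t)^2) * Q t)
       - (2:ℕ) * Uφ t ^ 1 * (-(D t) * (1 - Q t / 3) * Uφ t + m * (W t)^2)
       + (2:ℕ) * Uψ t ^ 1 * (-(D t) * (1 - Q t / 3) * Uψ t - n * (W t)^2)
       - (2:ℕ) * W t ^ 1 * (-(-(1/3) * D t * Q t + m * Uφ t + n * Uψ t) * W t)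
       - (-(D t) * (-(2/3) * Q t + γ) * Ω t)) t :=
    (((((hD t).pow 2).sub ((hUφ t).pow 2)).add ((hUψ t).pow 2)).sub
      ((hW t).pow 2)).sub (hΩ t)
  have hB : HasDerivAt (fun s => (1 - (D s)^2) *
      ((D s)^2 - (Uφ s)^2 + (Uψ s)^2 - (W s)^2 - Ω s)^3) _ t :=
    (((hasDerivAt_const t (1:ℝ)).sub ((hD t).pow 2)).mul (hX.pow 3))
  have hg : (1 - (D t)^2) * ((D t)^2 - (Uφ t)^2 + (Uψ t)^2 - (W t)^2 - Ω t)^3 ≠ 0 :=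
    mul_ne_zero h1 (pow_ne_zero 3 h2)
  have key := hN.div hB hg
  convert key using 1
  · rfl
  · rfl
  · rfl
  rw [hQ t]
  field_simp
  simp only [Pi.pow_apply, Pi.mul_apply, Pi.sub_apply]
  ring
end

section
/- For the 4-dimensional positive-curvature quintom system Q₀' = (1−Q₀²)(1 − 3(Û_φ² − Û_ψ² + (γ/2)Ω̂)), Û_φ' = 3mŴ² + 3Q₀Û_φ(−1 + Û_φ² − Û_ψ² + (γ/2)Ω̂), Û_ψ' = −3nŴ² + 3Q₀Û_ψ(−1 + Û_φ² − Û_ψ² + (γ/2)Ω̂), Ŵ' = −3Ŵ(mÛ_φ + nÛ_ψ − Q₀(Û_φ² − Û_ψ² + (γ/2)Ω̂)), where Ω̂ = 1 − (Û_φ² − Û_ψ² + Ŵ²), the function N = (nÛ_φ + mÛ_ψ)²Ω̂² / (1 − Q₀²)³ satisfies N' = −6γQ₀N wherever defined. -/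
theorem stmt_16 (m n γ : ℝ) (Q0 Uφ Uψ W : ℝ → ℝ) (Ω : ℝ → ℝ)
    (hΩ : ∀ t, Ω t = 1 - ((Uφ t)^2 - (Uψ t)^2 + (W t)^2))
    (hQ0 : ∀ t, HasDerivAt Q0
      ((1 - (Q0 t)^2) * (1 - 3 * ((Uφ t)^2 - (Uψ t)^2 + (γ/2) * Ω t))) t)
    (hUφ : ∀ t, HasDerivAt Uφ
      (3 * m * (W t)^2 + 3 * Q0 t * Uφ t * (-1 + (Uφ t)^2 - (Uψ t)^2 + (γ/2) * Ω t)) t)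
    (hUψ : ∀ t, HasDerivAt Uψ
      (-3 * n * (W t)^2 + 3 * Q0 t * Uψ t * (-1 + (Uφ t)^2 - (Uψ t)^2 + (γ/2) * Ω t)) t)
    (hW : ∀ t, HasDerivAt W
      (-3 * W t * (m * Uφ t + n * Uψ t - Q0 t * ((Uφ t)^2 - (Uψ t)^2 + (γ/2) * Ω t))) t) :
    ∀ t, (Q0 t)^2 ≠ 1 →
      HasDerivAt (fun s => (n * Uφ s + m * Uψ s)^2 * (Ω s)^2 / (1 - (Q0 s)^2)^3)
        (-6 * γ * Q0 t *
          ((n * Uφ t + m * Uψ t)^2 * (Ω t)^2 / (1 - (Q0 t)^2)^3)) t := by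
  have hΩeq : Ω = fun s => 1 - ((Uφ s)^2 - (Uψ s)^2 + (W s)^2) := funext hΩ
  subst hΩeq
  intro t ht
  have hden : (1 : ℝ) - (Q0 t)^2 ≠ 0 := sub_ne_zero.mpr (Ne.symm ht)
  set dφ := 3 * m * (W t)^2 + 3 * Q0 t * Uφ t *
      (-1 + (Uφ t)^2 - (Uψ t)^2 + (γ/2) * (1 - ((Uφ t)^2 - (Uψ t)^2 + (W t)^2))) with hdφ
  set dψ := -3 * n * (W t)^2 + 3 * Q0 t * Uψ t *
      (-1 + (Uφ t)^2 - (Uψ t)^2 + (γ/2) * (1 - ((Uφ t)^2 - (Uψ t)^2 + (W t)^2))) with hdψ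
  set dW := -3 * W t * (m * Uφ t + n * Uψ t - Q0 t *
      ((Uφ t)^2 - (Uψ t)^2 + (γ/2) * (1 - ((Uφ t)^2 - (Uψ t)^2 + (W t)^2)))) with hdW
  set dQ := (1 - (Q0 t)^2) *
      (1 - 3 * ((Uφ t)^2 - (Uψ t)^2 + (γ/2) * (1 - ((Uφ t)^2 - (Uψ t)^2 + (W t)^2)))) with hdQ
  have hA : HasDerivAt (fun s => n * Uφ s + m * Uψ s) (n * dφ + m * dψ) t :=
    ((hUφ t).const_mul n).add ((hUψ t).const_mul m)
  have hΩd : HasDerivAt (fun s => 1 - ((Uφ s)^2 - (Uψ s)^2 + (W s)^2))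
      (-(2 * Uφ t * dφ - 2 * Uψ t * dψ + 2 * W t * dW)) t := by
    have := (hasDerivAt_const t (1:ℝ)).fun_sub
      ((((hUφ t).fun_pow 2).fun_sub ((hUψ t).fun_pow 2)).fun_add ((hW t).fun_pow 2))
    refine this.congr_deriv ?_ <;> (try push_cast) <;> (try ring)
  have hNum : HasDerivAt
      (fun s => (n * Uφ s + m * Uψ s)^2 * (1 - ((Uφ s)^2 - (Uψ s)^2 + (W s)^2))^2)
      ((2 * (n * Uφ t + m * Uψ t) * (n * dφ + m * dψ)) *
        (1 - ((Uφ t)^2 - (Uψ t)^2 + (W t)^2))^2 +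
       (n * Uφ t + m * Uψ t)^2 *
        (2 * (1 - ((Uφ t)^2 - (Uψ t)^2 + (W t)^2)) *
          (-(2 * Uφ t * dφ - 2 * Uψ t * dψ + 2 * W t * dW)))) t := by
    have := (hA.fun_pow 2).fun_mul (hΩd.fun_pow 2)
    refine this.congr_deriv ?_ <;> (try push_cast) <;> (try ring)
  have hDen : HasDerivAt (fun s => (1 - (Q0 s)^2)^3)
      (3 * (1 - (Q0 t)^2)^2 * (-(2 * Q0 t * dQ))) t := by
    have h1 : HasDerivAt (fun s => 1 - (Q0 s)^2) (-(2 * Q0 t * dQ)) t := by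
      have := (hasDerivAt_const t (1:ℝ)).fun_sub ((hQ0 t).fun_pow 2)
      refine this.congr_deriv ?_ <;> (try push_cast) <;> (try ring)
    have := h1.fun_pow 3
    refine this.congr_deriv ?_ <;> (try push_cast) <;> (try ring)
  have hd3 : ((1 : ℝ) - (Q0 t)^2)^3 ≠ 0 := pow_ne_zero _ hden
  have := hNum.fun_div hDen hd3
  refine this.congr_deriv ?_
  rw [hdφ, hdψ, hdW, hdQ]
  field_simp
  ring
end
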